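/- Let K ≥ 2 and q ∈ {1,…,K−1}, and fix a real t ≠ 0. Then exp(Re(e^{2πiq/K} log ζ(σ + it))) = o(1/(σ−1)) as σ → 1⁺, where log ζ(s) = ∑_p ∑_k p^{−ks}/k. -/

import Mathlib

open Complex Filter Asymptotics Topology

lemma hasSum_pnat_log (p : Nat.Primes) {s : ℂ} (hs : 1 < s.re) :
    HasSum (fun k : ℕ+ => (p : ℂ) ^ (-((k : ℕ) : ℂ) * s) / ((k : ℕ) : ℂ))
      (-log (1 - (p : ℂ) ^ (-s))) := by
  have hz : ‖(p : ℂ) ^ (-s)‖ < 1 := by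
    rw [show ((p : ℂ)) = ((p : ℕ) : ℂ) from rfl,
      norm_natCast_cpow_of_re_ne_zero _ (by simp only [neg_re]; linarith)]
    refine Real.rpow_lt_one_of_one_lt_of_neg ?_ (by simp only [neg_re]; linarith)
    exact_mod_cast p.prop.one_lt
  have H := hasSum_taylorSeries_neg_log hz
  have h0 : ∀ x ∉ Set.range ((↑) : ℕ+ → ℕ), ((p:ℂ) ^ (-s)) ^ x / (x : ℂ) = 0 := by
    intro x hx
    have : x = 0 := by
      by_contra h
      exact hx ⟨⟨x, Nat.pos_of_ne_zero h⟩, rfl⟩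
    simp [this]
  have H2 := (Function.Injective.hasSum_iff PNat.coe_injective h0).mpr H
  refine H2.congr_fun fun k => ?_
  rw [show -((k:ℕ):ℂ) * s = ((k:ℕ):ℂ) * (-s) by ring, cpow_nat_mul]
  rfl

noncomputable def Lfun (t : ℝ) (σ : ℝ) : ℂ :=
  ∑' p : Nat.Primes, -log (1 - (p : ℂ) ^ (-((σ : ℂ) + I * (t : ℂ))))

lemma re_aux (t σ : ℝ) : ((σ : ℂ) + I * (t : ℂ)).re = σ := by
  simp

lemma norm_p_cpow (p : Nat.Primes) (t : ℝ) {σ : ℝ} (hσ : 0 < σ) :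
    ‖(p : ℂ) ^ (-((σ : ℂ) + I * (t : ℂ)))‖ = (p : ℝ) ^ (-σ) := by
  rw [show ((p : ℂ)) = ((p : ℕ) : ℂ) from rfl,
    norm_natCast_cpow_of_re_ne_zero _ (by rw [neg_re, re_aux]; exact (neg_ne_zero.mpr hσ.ne'))]
  rw [neg_re, re_aux]

lemma p_rpow_le_half (p : Nat.Primes) {a : ℝ} (ha : 1 < a) : (p : ℝ) ^ (-a) ≤ 1/2 := by
  have hp2 : (2 : ℝ) ≤ (p : ℝ) := by exact_mod_cast p.prop.two_le
  calc (p : ℝ) ^ (-a) ≤ (p : ℝ) ^ (-1 : ℝ) :=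
        Real.rpow_le_rpow_of_exponent_le (by linarith) (by linarith)
    _ = ((p : ℝ))⁻¹ := Real.rpow_neg_one _
    _ ≤ 1/2 := by
        rw [one_div]
        exact inv_anti₀ (by norm_num) hp2

lemma norm_log_term_le (p : Nat.Primes) (t : ℝ) {a σ : ℝ} (ha : 1 < a) (hσ : a ≤ σ) :
    ‖-log (1 - (p : ℂ) ^ (-((σ : ℂ) + I * (t : ℂ))))‖ ≤ 2 * (p : ℝ) ^ (-a) := by
  set z : ℂ := (p : ℂ) ^ (-((σ : ℂ) + I * (t : ℂ))) with hz_def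
  have hp1 : (1 : ℝ) ≤ (p : ℝ) := by
    have : (2:ℝ) ≤ (p:ℝ) := by exact_mod_cast p.prop.two_le
    linarith
  have hn : ‖z‖ = (p : ℝ) ^ (-σ) := norm_p_cpow p t (by linarith)
  have hle : ‖z‖ ≤ (p : ℝ) ^ (-a) := by
    rw [hn]
    exact Real.rpow_le_rpow_of_exponent_le hp1 (by linarith)
  have hhalf : ‖z‖ ≤ 1/2 := hle.trans (p_rpow_le_half p ha)
  have h1 : ‖-z‖ < 1 := by rw [norm_neg]; linarith
  have hlog := norm_log_one_add_le h1
  rw [norm_neg]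
  have he : (1 : ℂ) + -z = 1 - z := by ring
  rw [he] at hlog
  have hn0 : 0 ≤ ‖z‖ := norm_nonneg _
  have hinv : (1 - ‖-z‖)⁻¹ ≤ 2 := by
    rw [norm_neg]
    rw [show (2:ℝ) = ((1:ℝ)/2)⁻¹ by norm_num]
    exact inv_anti₀ (by norm_num) (by linarith)
  rw [norm_neg] at hlog
  have h2 : ‖z‖ ^ 2 * (1 - ‖z‖)⁻¹ / 2 + ‖z‖ ≤ 2 * ‖z‖ := by
    have hinv0 : 0 ≤ (1 - ‖z‖)⁻¹ := by rw [inv_nonneg]; linarith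
    rw [norm_neg] at hinv
    nlinarith
  calc ‖log (1 - z)‖ ≤ ‖z‖ ^ 2 * (1 - ‖z‖)⁻¹ / 2 + ‖z‖ := hlog
    _ ≤ 2 * ‖z‖ := h2
    _ ≤ 2 * (p : ℝ) ^ (-a) := by linarith

lemma Lfun_continuousOn (t : ℝ) : ContinuousOn (Lfun t) (Set.Ioi 1) := by
  intro σ₀ hσ₀
  apply ContinuousAt.continuousWithinAt
  set a : ℝ := (1 + σ₀) / 2 with ha_def
  have ha1 : 1 < a := by simp only [ha_def]; simp only [Set.mem_Ioi] at hσ₀; linarith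
  have haσ : a < σ₀ := by simp only [ha_def]; simp only [Set.mem_Ioi] at hσ₀; linarith
  have hcont : ContinuousOn (Lfun t) (Set.Ici a) := by
    refine continuousOn_tsum (f := fun (p : Nat.Primes) (σ : ℝ) =>
      -log (1 - (p : ℂ) ^ (-((σ : ℂ) + I * (t : ℂ)))))
      (u := fun p : Nat.Primes => 2 * (p : ℝ) ^ (-a)) ?_ ?_ ?_
    · intro p σ hσ
      apply ContinuousAt.continuousWithinAt
      have hp0 : (p : ℂ) ≠ 0 := by
        simp only [ne_eq, Nat.cast_eq_zero]
        exact p.prop.pos.ne'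
      have hw : ContinuousAt (fun σ : ℝ => (p : ℂ) ^ (-((σ : ℂ) + I * (t : ℂ)))) σ := by
        refine (continuousAt_const_cpow hp0).comp ?_
        exact ((Complex.continuous_ofReal.add continuous_const).neg).continuousAt
      have hσa : a ≤ σ := hσ
      have hmem : (1 - (p : ℂ) ^ (-((σ : ℂ) + I * (t : ℂ)))) ∈ slitPlane := by
        rw [mem_slitPlane_iff]
        left
        have hre : ((p : ℂ) ^ (-((σ : ℂ) + I * (t : ℂ)))).re
            ≤ ‖(p : ℂ) ^ (-((σ : ℂ) + I * (t : ℂ)))‖ := by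
          exact Complex.re_le_norm _
        have hn : ‖(p : ℂ) ^ (-((σ : ℂ) + I * (t : ℂ)))‖ ≤ 1/2 := by
          rw [norm_p_cpow p t (by linarith)]
          calc (p:ℝ) ^ (-σ) ≤ (p:ℝ) ^ (-a) := by
                refine Real.rpow_le_rpow_of_exponent_le ?_ (by linarith)
                have : (2:ℝ) ≤ (p:ℝ) := by exact_mod_cast p.prop.two_le
                linarith
            _ ≤ 1/2 := p_rpow_le_half p ha1
        simp only [sub_re, one_re]
        linarith
      have hsub : ContinuousAt (fun σ : ℝ => 1 - (p : ℂ) ^ (-((σ : ℂ) + I * (t : ℂ)))) σ :=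
        continuousAt_const.sub hw
      exact (ContinuousAt.comp (x := σ)
        (f := fun σ : ℝ => 1 - (p : ℂ) ^ (-((σ : ℂ) + I * (t : ℂ))))
        (g := Complex.log) (continuousAt_clog hmem) hsub).neg
    · exact (Nat.Primes.summable_rpow.mpr (by linarith)).mul_left 2
    · intro p σ hσ
      exact norm_log_term_le p t ha1 hσ
  exact hcont.continuousAt (Ici_mem_nhds haσ)

lemma exp_Lfun (t : ℝ) {σ : ℝ} (hσ : 1 < σ) :
    Complex.exp (Lfun t σ) = riemannZeta ((σ : ℂ) + I * (t : ℂ)) :=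
  riemannZeta_eulerProduct_exp_log (by rw [re_aux]; exact hσ)

-- constancy of a continuous function taking values in c + 2πℤ on an interval
lemma discrete_val_const {b : ℝ} (u : ℝ → ℝ) (hu : ContinuousOn u (Set.Ioo 1 b))
    (c : ℝ) (hval : ∀ σ ∈ Set.Ioo 1 b, ∃ n : ℤ, u σ = c + n * (2 * Real.pi))
    {x y : ℝ} (hx : x ∈ Set.Ioo 1 b) (hy : y ∈ Set.Ioo 1 b) : u x = u y := by
  have pi_pos := Real.pi_pos
  have key : ∀ x y : ℝ, x ∈ Set.Ioo 1 b → y ∈ Set.Ioo 1 b → x ≤ y → u x = u y := by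
    intro x y hx hy hxy
    by_contra hne
    obtain ⟨nx, hnx⟩ := hval x hx
    obtain ⟨ny, hny⟩ := hval y hy
    have hIcc : Set.Icc x y ⊆ Set.Ioo 1 b := fun z hz =>
      ⟨lt_of_lt_of_le hx.1 hz.1, lt_of_le_of_lt hz.2 hy.2⟩
    have hucont : ContinuousOn u (Set.Icc x y) := hu.mono hIcc
    rcases lt_or_gt_of_ne hne with hlt | hgt
    · have hnxy : nx < ny := by
        by_contra h
        push_neg at h
        have : (ny : ℝ) ≤ nx := by exact_mod_cast h
        nlinarith
      have hnxy' : (nx : ℝ) + 1 ≤ (ny : ℝ) := by exact_mod_cast hnxy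
      have hmem : u x + Real.pi ∈ Set.Icc (u x) (u y) := by
        constructor
        · linarith
        · nlinarith
      obtain ⟨z, hz, hz2⟩ := intermediate_value_Icc hxy hucont hmem
      obtain ⟨nz, hnz⟩ := hval z (hIcc hz)
      have : ((2 * (nz - nx) : ℤ) : ℝ) * Real.pi = 1 * Real.pi := by push_cast; nlinarith
      have h1 : (2 * (nz - nx) : ℤ) = 1 := by
        exact_mod_cast mul_right_cancel₀ pi_pos.ne' this
      omega
    · have hnxy : ny < nx := by
        by_contra h
        push_neg at h
        have : (nx : ℝ) ≤ ny := by exact_mod_cast h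
        nlinarith
      have hnxy' : (ny : ℝ) + 1 ≤ (nx : ℝ) := by exact_mod_cast hnxy
      have hmem : u y + Real.pi ∈ Set.Icc (u y) (u x) := by
        constructor
        · linarith
        · nlinarith
      obtain ⟨z, hz, hz2⟩ := intermediate_value_Icc' hxy hucont hmem
      obtain ⟨nz, hnz⟩ := hval z (hIcc hz)
      have : ((2 * (nz - ny) : ℤ) : ℝ) * Real.pi = 1 * Real.pi := by push_cast; nlinarith
      have h1 : (2 * (nz - ny) : ℤ) = 1 := by
        exact_mod_cast mul_right_cancel₀ pi_pos.ne' this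
      omega
  rcases le_total x y with h | h
  · exact key x y hx hy h
  · exact (key y x hy hx h).symm

theorem exp_re_logzeta_littleO (K : ℕ) (hK : 2 ≤ K) (q : ℕ) (hq1 : 1 ≤ q) (hqK : q < K)
    (t : ℝ) (ht : t ≠ 0) :
    (fun σ : ℝ => Real.exp
        ((Complex.exp (2 * π * I * q / K) *
          ∑' p : Nat.Primes, ∑' k : ℕ+,
            (p : ℂ) ^ (-((k : ℕ) : ℂ) * (σ + I * t)) / (k : ℕ)).re))
      =o[nhdsWithin 1 (Set.Ioi 1)] (fun σ : ℝ => 1 / (σ - 1)) := by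
  set ω : ℂ := Complex.exp (2 * π * I * q / K) with hω_def
  set z₁ : ℂ := riemannZeta (1 + I * (t : ℂ)) with hz₁_def
  have hne1 : (1 : ℂ) + I * (t : ℂ) ≠ 1 := by
    intro h
    apply ht
    have := congrArg Complex.im h
    simpa using this
  have hz₁ : z₁ ≠ 0 := by
    refine riemannZeta_ne_zero_of_one_le_re ?_
    simp
  -- ζ(σ + it) → ζ(1 + it) along σ → 1⁺
  have hpath : ContinuousAt (fun σ : ℝ => ((σ : ℂ) + I * (t : ℂ))) 1 :=
    ((Complex.continuous_ofReal.add continuous_const)).continuousAt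
  have hζc : ContinuousAt (fun σ : ℝ => riemannZeta ((σ : ℂ) + I * (t : ℂ))) 1 := by
    apply ContinuousAt.comp _ hpath
    simp only [ofReal_one]
    exact (differentiableAt_riemannZeta hne1).continuousAt
  have hζt : Tendsto (fun σ : ℝ => riemannZeta ((σ : ℂ) + I * (t : ℂ)))
      (nhdsWithin 1 (Set.Ioi 1)) (𝓝 z₁) := by
    have h2 : Tendsto (fun σ : ℝ => riemannZeta ((σ : ℂ) + I * (t : ℂ)))
        (nhdsWithin 1 (Set.Ioi 1)) (𝓝 (riemannZeta (((1:ℝ) : ℂ) + I * (t : ℂ)))) :=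
      hζc.tendsto.mono_left nhdsWithin_le_nhds
    simpa using h2
  have hquot : Tendsto (fun σ : ℝ => riemannZeta ((σ : ℂ) + I * (t : ℂ)) / z₁)
      (nhdsWithin 1 (Set.Ioi 1)) (𝓝 1) := by
    have h2 := hζt.div_const z₁
    rwa [div_self hz₁] at h2
  have hsmall : ∀ᶠ (σ : ℝ) in nhdsWithin 1 (Set.Ioi 1),
      ‖riemannZeta ((σ : ℂ) + I * (t : ℂ)) / z₁ - 1‖ < 1/2 := by
    have := Metric.tendsto_nhds.mp hquot (1/2) (by norm_num)
    filter_upwards [this] with σ h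
    rwa [dist_eq_norm] at h
  obtain ⟨b, hb, hIb⟩ := (mem_nhdsGT_iff_exists_Ioo_subset).mp hsmall
  simp only [Set.mem_Ioi] at hb
  -- the branch functions
  set g : ℝ → ℂ := fun σ => Complex.log (riemannZeta ((σ : ℂ) + I * (t : ℂ)) / z₁) with hg_def
  set F : ℝ → ℂ := fun σ => Lfun t σ - g σ with hF_def
  set σ₀ : ℝ := (1 + b) / 2 with hσ₀_def
  have hσ₀ : σ₀ ∈ Set.Ioo 1 b := by constructor <;> (simp only [hσ₀_def]; linarith)
  have hζne : ∀ σ : ℝ, 1 < σ → riemannZeta ((σ : ℂ) + I * (t : ℂ)) ≠ 0 := by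
    intro σ hσ
    refine riemannZeta_ne_zero_of_one_le_re ?_
    rw [re_aux]; linarith
  have hexp : ∀ σ ∈ Set.Ioo 1 b, Complex.exp (F σ) = z₁ := by
    intro σ hσ
    have hζσ := hζne σ hσ.1
    have hq0 : riemannZeta ((σ : ℂ) + I * (t : ℂ)) / z₁ ≠ 0 := div_ne_zero hζσ hz₁
    rw [hF_def]
    simp only
    rw [Complex.exp_sub, exp_Lfun t hσ.1, hg_def]
    simp only
    rw [Complex.exp_log hq0]
    field_simp
  -- F is continuous on Ioo 1 b
  have hgc : ContinuousOn g (Set.Ioo 1 b) := by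
    intro σ hσ
    apply ContinuousAt.continuousWithinAt
    have hζcσ : ContinuousAt (fun σ : ℝ => riemannZeta ((σ : ℂ) + I * (t : ℂ))) σ := by
      apply ContinuousAt.comp _
        ((Complex.continuous_ofReal.add continuous_const)).continuousAt
      refine (differentiableAt_riemannZeta ?_).continuousAt
      intro h
      apply ht
      have := congrArg Complex.im h
      simpa using this
    have hquotc : ContinuousAt (fun σ : ℝ => riemannZeta ((σ : ℂ) + I * (t : ℂ)) / z₁) σ :=
      hζcσ.div_const z₁
    have hmem : riemannZeta ((σ : ℂ) + I * (t : ℂ)) / z₁ ∈ slitPlane := by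
      have h1 := hIb hσ
      simp only [Set.mem_setOf_eq] at h1
      rw [mem_slitPlane_iff]
      left
      have : ‖riemannZeta ((σ : ℂ) + I * (t : ℂ)) / z₁ - 1‖ < 1/2 := h1
      have hre := Complex.abs_re_le_norm (riemannZeta ((σ : ℂ) + I * (t : ℂ)) / z₁ - 1)
      have : |(riemannZeta ((σ : ℂ) + I * (t : ℂ)) / z₁ - 1).re| < 1/2 := lt_of_le_of_lt hre this
      have h2 := abs_lt.mp this
      simp only [sub_re, one_re] at h2
      linarith [h2.1]
    exact ContinuousAt.comp (x := σ)
      (f := fun σ : ℝ => riemannZeta ((σ : ℂ) + I * (t : ℂ)) / z₁)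
      (g := Complex.log) (continuousAt_clog hmem) hquotc
  have hFc : ContinuousOn F (Set.Ioo 1 b) := by
    refine ContinuousOn.sub ?_ hgc
    exact (Lfun_continuousOn t).mono (fun x hx => hx.1)
  -- F has constant imaginary part
  have hval : ∀ σ ∈ Set.Ioo 1 b, ∃ n : ℤ, (F σ).im = (Complex.log z₁).im + n * (2 * Real.pi) := by
    intro σ hσ
    have h1 : Complex.exp (F σ) = Complex.exp (Complex.log z₁) := by
      rw [hexp σ hσ, Complex.exp_log hz₁]
    obtain ⟨n, hn⟩ := Complex.exp_eq_exp_iff_exists_int.mp h1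
    refine ⟨n, ?_⟩
    have := congrArg Complex.im hn
    simpa [mul_im, mul_re] using this
  have him : ∀ σ ∈ Set.Ioo 1 b, (F σ).im = (F σ₀).im := by
    intro σ hσ
    exact discrete_val_const (fun σ => (F σ).im)
      (Complex.continuous_im.comp_continuousOn hFc) _ hval hσ hσ₀
  have hre : ∀ σ ∈ Set.Ioo 1 b, (F σ).re = (F σ₀).re := by
    intro σ hσ
    have h1 : Real.exp ((F σ).re) = Real.exp ((F σ₀).re) := by
      rw [show Real.exp ((F σ).re) = ‖Complex.exp (F σ)‖ from (Complex.norm_exp _).symm,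
        show Real.exp ((F σ₀).re) = ‖Complex.exp (F σ₀)‖ from (Complex.norm_exp _).symm,
        hexp σ hσ, hexp σ₀ hσ₀]
    exact Real.exp_eq_exp.mp h1
  have hFconst : ∀ σ ∈ Set.Ioo 1 b, F σ = F σ₀ := by
    intro σ hσ
    exact Complex.ext (hre σ hσ) (him σ hσ)
  -- g is bounded by 1 on the interval
  have hgb : ∀ σ ∈ Set.Ioo 1 b, ‖g σ‖ ≤ 1 := by
    intro σ hσ
    have h1 := hIb hσ
    simp only [Set.mem_setOf_eq] at h1
    set w : ℂ := riemannZeta ((σ : ℂ) + I * (t : ℂ)) / z₁ - 1 with hw_def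
    have hw : ‖w‖ < 1/2 := h1
    have hw1 : ‖w‖ < 1 := by linarith
    have hlog := norm_log_one_add_le hw1
    have he : (1 : ℂ) + w = riemannZeta ((σ : ℂ) + I * (t : ℂ)) / z₁ := by
      rw [hw_def]; ring
    rw [he] at hlog
    have hn0 : 0 ≤ ‖w‖ := norm_nonneg _
    have hinv : (1 - ‖w‖)⁻¹ ≤ 2 := by
      rw [show (2:ℝ) = ((1:ℝ)/2)⁻¹ by norm_num]
      exact inv_anti₀ (by norm_num) (by linarith)
    have hinv0 : 0 ≤ (1 - ‖w‖)⁻¹ := by rw [inv_nonneg]; linarith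
    calc ‖g σ‖ ≤ ‖w‖ ^ 2 * (1 - ‖w‖)⁻¹ / 2 + ‖w‖ := hlog
      _ ≤ 1 := by nlinarith
  -- L is bounded on the interval
  have hLb : ∀ σ ∈ Set.Ioo 1 b, ‖Lfun t σ‖ ≤ ‖F σ₀‖ + 1 := by
    intro σ hσ
    have : Lfun t σ = F σ + g σ := by rw [hF_def]; ring
    rw [this, hFconst σ hσ]
    exact (norm_add_le _ _).trans (by linarith [hgb σ hσ])
  -- the main function is eventually bounded
  have hIb_mem : Set.Ioo 1 b ∈ nhdsWithin (1:ℝ) (Set.Ioi 1) :=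
    Ioo_mem_nhdsGT_of_mem ⟨le_refl 1, hb⟩
  have hbigO : (fun σ : ℝ => Real.exp
        ((ω * ∑' p : Nat.Primes, ∑' k : ℕ+,
            (p : ℂ) ^ (-((k : ℕ) : ℂ) * (σ + I * t)) / (k : ℕ)).re))
      =O[nhdsWithin 1 (Set.Ioi 1)] (fun _ : ℝ => (1 : ℝ)) := by
    rw [isBigO_iff]
    refine ⟨Real.exp (‖ω‖ * (‖F σ₀‖ + 1)), ?_⟩
    filter_upwards [hIb_mem] with σ hσ
    have hσ1 : 1 < σ := hσ.1
    have hD : (∑' p : Nat.Primes, ∑' k : ℕ+,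
        (p : ℂ) ^ (-((k : ℕ) : ℂ) * ((σ : ℂ) + I * (t : ℂ))) / ((k : ℕ) : ℂ)) = Lfun t σ := by
      refine tsum_congr fun p => ?_
      exact (hasSum_pnat_log p (by rw [re_aux]; exact hσ1)).tsum_eq
    rw [hD]
    have hX : (ω * Lfun t σ).re ≤ ‖ω‖ * (‖F σ₀‖ + 1) := by
      have h1 : (ω * Lfun t σ).re ≤ ‖ω * Lfun t σ‖ := by
        exact Complex.re_le_norm _
      have h2 : ‖ω * Lfun t σ‖ = ‖ω‖ * ‖Lfun t σ‖ := norm_mul _ _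
      have h3 : ‖ω‖ * ‖Lfun t σ‖ ≤ ‖ω‖ * (‖F σ₀‖ + 1) :=
        mul_le_mul_of_nonneg_left (hLb σ hσ) (norm_nonneg _)
      linarith
    rw [Real.norm_eq_abs, Real.norm_eq_abs, abs_of_pos (Real.exp_pos _)]
    rw [abs_one, mul_one]
    exact Real.exp_le_exp.mpr hX
  have ho : (fun _ : ℝ => (1 : ℝ)) =o[nhdsWithin 1 (Set.Ioi 1)] (fun σ : ℝ => 1 / (σ - 1)) := by
    rw [isLittleO_iff_tendsto' ?_]
    · have heq : ∀ᶠ σ in nhdsWithin (1:ℝ) (Set.Ioi 1), (1 : ℝ) / (1 / (σ - 1)) = σ - 1 := by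
        filter_upwards [self_mem_nhdsWithin] with σ hσ
        rw [one_div_one_div]
      refine (tendsto_congr' heq).mpr ?_
      have : Tendsto (fun σ : ℝ => σ - 1) (𝓝 (1:ℝ)) (𝓝 0) := by
        have := (continuous_id.sub (continuous_const (y := (1:ℝ)))).tendsto 1
        rw [show (0:ℝ) = id 1 - 1 by simp]; exact this
      exact this.mono_left nhdsWithin_le_nhds
    · filter_upwards [self_mem_nhdsWithin] with σ hσ h
      exfalso
      have hσ1 : (0:ℝ) < σ - 1 := sub_pos.mpr hσ
      rw [div_eq_zero_iff] at h
      rcases h with h | h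
      · norm_num at h
      · linarith
  exact hbigO.trans_isLittleO ho
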